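/- Let K be a field, m ≥ 1, k ≥ 1, G_0 ∈ K^{m×m}, Ĝ_0 ∈ K^{km×km}, let φ ∈ K^k be a vector whose last coordinate equals 1, and let v ∈ K^k with v ≠ 0, such that Ĝ_0·(φ⊗I_m) = v ⊗ G_0. Then: (1) for every u ∈ K^m, G_0 u = 0 if and only if Ĝ_0·(φ⊗u) = 0; moreover u ≠ 0 if and only if φ⊗u ≠ 0. (2) If in addition dim ker Ĝ_0 = dim ker G_0, then a family u_1, …, u_t is a basis of ker G_0 = {u : G_0u = 0} if and only if φ⊗u_1, …, φ⊗u_t is a basis of ker Ĝ_0 = {x : Ĝ_0x = 0}. -/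
import Mathlib


open Matrix

/-- Evaluated form of the relation `Ĝ(λ)(Φ_k(λ)⊗I_m) = v ⊗ G(λ)` at a finite
eigenvalue: if `Ĝ₀ (φ ⊗ I_m) = v ⊗ G₀` with `φ` having last coordinate `1` and `v ≠ 0`, then
`G₀ u = 0 ↔ Ĝ₀ (φ ⊗ u) = 0` (and `u ≠ 0 ↔ φ ⊗ u ≠ 0`); moreover, if the kernels of `Ĝ₀` and
`G₀` have equal dimension, bases of `ker G₀` correspond to bases of `ker Ĝ₀` under `u ↦ φ ⊗ u`. -/
theorem kernel_correspondence_kronecker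
    {K : Type*} [Field K] {m k : ℕ} (hm : 1 ≤ m) (hk : 1 ≤ k)
    (G₀ : Matrix (Fin m) (Fin m) K)
    (Ghat₀ : Matrix (Fin k × Fin m) (Fin k × Fin m) K)
    (φ : Fin k → K) (hφlast : φ ⟨k - 1, by omega⟩ = 1)
    (v : Fin k → K) (hv : v ≠ 0)
    (hrel : Ghat₀ *
        (Matrix.of fun (p : Fin k × Fin m) (j : Fin m) => if p.2 = j then φ p.1 else 0)
      = (Matrix.of fun (p : Fin k × Fin m) (j : Fin m) => if p.2 = j then v p.1 else 0) * G₀) :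
    (∀ u : Fin m → K,
      (G₀ *ᵥ u = 0 ↔ Ghat₀ *ᵥ (fun p : Fin k × Fin m => φ p.1 * u p.2) = 0) ∧
      (u ≠ 0 ↔ (fun p : Fin k × Fin m => φ p.1 * u p.2) ≠ 0)) ∧
    (Module.finrank K (LinearMap.ker Ghat₀.mulVecLin)
        = Module.finrank K (LinearMap.ker G₀.mulVecLin) →
      ∀ (t : ℕ) (u : Fin t → (Fin m → K)),
        (LinearIndependent K u ∧
            Submodule.span K (Set.range u) = LinearMap.ker G₀.mulVecLin) ↔
        (LinearIndependent K (fun i (p : Fin k × Fin m) => φ p.1 * u i p.2) ∧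
            Submodule.span K (Set.range (fun i (p : Fin k × Fin m) => φ p.1 * u i p.2))
              = LinearMap.ker Ghat₀.mulVecLin)) := by

  classical
  -- The linear map `u ↦ φ ⊗ u`
  set T : (Fin m → K) →ₗ[K] (Fin k × Fin m → K) :=
    { toFun := fun u p => φ p.1 * u p.2
      map_add' := by intro a b; funext p; simp [mul_add]
      map_smul' := by intro c a; funext p; simp [mul_left_comm] } with hT
  have hTapp : ∀ u (p : Fin k × Fin m), T u p = φ p.1 * u p.2 := fun u p => rfl
  -- key computation: Ĝ₀ (φ ⊗ u) = v ⊗ (G₀ u)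
  have hcol : ∀ (p : Fin k × Fin m) (j : Fin m),
      (∑ q1 : Fin k, Ghat₀ p (q1, j) * φ q1) = v p.1 * G₀ p.2 j := by
    intro p j
    have h := congrFun (congrFun hrel p) j
    simp only [Matrix.mul_apply, Matrix.of_apply, Fintype.sum_prod_type, mul_ite, mul_zero,
      ite_mul, zero_mul, Finset.sum_ite_eq', Finset.mem_univ, if_true] at h
    simpa using h
  have key : ∀ u : Fin m → K, Ghat₀ *ᵥ (T u)
      = fun p : Fin k × Fin m => v p.1 * (G₀ *ᵥ u) p.2 := by
    intro u
    funext p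
    have : (Ghat₀ *ᵥ (T u)) p
        = ∑ j : Fin m, (∑ q1 : Fin k, Ghat₀ p (q1, j) * φ q1) * u j := by
      simp only [Matrix.mulVec, dotProduct, Fintype.sum_prod_type, hTapp,
        Finset.sum_mul]
      rw [Finset.sum_comm]
      congr 1; funext j; congr 1; funext q1; ring
    rw [this]
    simp only [hcol, Matrix.mulVec, dotProduct, Finset.mul_sum]
    congr 1; funext j; ring
  obtain ⟨q1, hq1⟩ : ∃ q1, v q1 ≠ 0 := Function.ne_iff.mp hv
  -- part 1, kernel correspondence
  have hker : ∀ u : Fin m → K, G₀ *ᵥ u = 0 ↔ Ghat₀ *ᵥ (T u) = 0 := by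
    intro u
    constructor
    · intro h; rw [key]; funext p; simp [h]
    · intro h
      funext j
      have := congrFun h (q1, j)
      rw [key] at this
      simp only [Pi.zero_apply] at this ⊢
      exact (mul_eq_zero.mp this).resolve_left hq1
  -- injectivity of T
  have hTinj : Function.Injective T := by
    rw [← LinearMap.ker_eq_bot, LinearMap.ker_eq_bot']
    intro u hu
    funext j
    have := congrFun hu (⟨k - 1, by omega⟩, j)
    simpa [hTapp, hφlast] using this
  have hTne : ∀ u : Fin m → K, u ≠ 0 ↔ T u ≠ 0 := by
    intro u
    constructor
    · intro h hc; exact h (hTinj (by simpa using hc))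
    · intro h hc; exact h (by rw [hc]; exact map_zero T)
  refine ⟨fun u => ⟨hker u, hTne u⟩, ?_⟩
  -- part 2
  intro hdim t u
  have hmapker : Submodule.map T (LinearMap.ker G₀.mulVecLin)
      = LinearMap.ker Ghat₀.mulVecLin := by
    have hle : Submodule.map T (LinearMap.ker G₀.mulVecLin)
        ≤ LinearMap.ker Ghat₀.mulVecLin := by
      rintro x ⟨w, hw, rfl⟩
      rw [LinearMap.mem_ker, Matrix.mulVecLin_apply]
      exact (hker w).mp (by simpa [Matrix.mulVecLin_apply] using hw)
    refine Submodule.eq_of_le_of_finrank_le hle ?_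
    rw [hdim]
    exact le_of_eq ((Submodule.equivMapOfInjective T hTinj _).finrank_eq)
  have hrange : ∀ (w : Fin t → Fin m → K),
      Set.range (fun i (p : Fin k × Fin m) => φ p.1 * w i p.2) = T '' Set.range w := by
    intro w
    rw [← Set.range_comp]
    rfl
  constructor
  · rintro ⟨hind, hspan⟩
    refine ⟨hind.map' T (LinearMap.ker_eq_bot.mpr hTinj), ?_⟩
    rw [hrange, ← Submodule.map_span, hspan, hmapker]
  · rintro ⟨hind, hspan⟩
    rw [hrange, ← Submodule.map_span] at hspan
    have hind' : LinearIndependent K u := by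
      have : LinearIndependent K (T ∘ u) := hind
      exact LinearIndependent.of_comp T this
    refine ⟨hind', ?_⟩
    have : Submodule.map T (Submodule.span K (Set.range u))
        = Submodule.map T (LinearMap.ker G₀.mulVecLin) := by rw [hspan, hmapker]
    exact Submodule.map_injective_of_injective hTinj this
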